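/- Suppose n is odd, A ⊆ Z_n is symmetric, and C = rA + h where gcd(r,n) = 1 and h ∈ Z_n. If C is symmetric, then h is a multiple of n / gcd(|A|, n). -/
import Mathlib


open Pointwise

lemma aux_dvd (n m : ℕ) (hn : n ≠ 0) (h : ZMod n) (H : (m : ZMod n) * h = 0) :
    ∃ t : ZMod n, h = t * ((n / Nat.gcd m n : ℕ) : ZMod n) := by
  haveI : NeZero n := ⟨hn⟩
  set d := Nat.gcd m n with hd
  have hdpos : 0 < d := Nat.gcd_pos_of_pos_right m (Nat.pos_of_ne_zero hn)
  have hdvd : n ∣ m * h.val := by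
    rw [← ZMod.natCast_eq_zero_iff, Nat.cast_mul, ZMod.natCast_val, ZMod.cast_id]
    exact H
  -- n/d ∣ h.val
  have h1 : (n / d) ∣ (m / d) * h.val := by
    rcases hdvd with ⟨k, hk⟩
    refine ⟨k, ?_⟩
    have : d * ((m / d) * h.val) = d * ((n / d) * k) := by
      rw [← mul_assoc, ← mul_assoc, Nat.mul_div_cancel' (Nat.gcd_dvd_left m n),
        Nat.mul_div_cancel' (Nat.gcd_dvd_right m n), hk]
    exact Nat.eq_of_mul_eq_mul_left hdpos this
  have hcop : Nat.Coprime (n / d) (m / d) := by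
    have := Nat.coprime_div_gcd_div_gcd (m := m) (n := n) hdpos
    exact this.symm
  have h2 : (n / d) ∣ h.val := hcop.dvd_of_dvd_mul_left h1
  rcases h2 with ⟨k, hk⟩
  refine ⟨(k : ZMod n), ?_⟩
  have : h = ((h.val : ℕ) : ZMod n) := by rw [ZMod.natCast_val, ZMod.cast_id]
  rw [this, hk, Nat.cast_mul, mul_comm]

/-- Suppose `n` is odd, `A ⊆ Z_n` is symmetric, and `C = rA + h` where `r` is a
unit of `Z_n` (i.e. `gcd(r,n) = 1`) and `h ∈ Z_n`. If `C` is symmetric, then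
`h` is a multiple of `n / gcd(|A|, n)`. -/
theorem stmt11 (n : ℕ) (hodd : Odd n)
    (A : Finset (ZMod n)) (hsymA : A = -A)
    (r : ZMod n) (hr : IsUnit r) (h : ZMod n)
    (C : Finset (ZMod n)) (hC : C = A.image (fun x => r * x + h))
    (hsymC : C = -C) :
    ∃ t : ZMod n, h = t * ((n / Nat.gcd A.card n : ℕ) : ZMod n) := by
  have hn : n ≠ 0 := by rintro rfl; simp [Nat.odd_iff] at hodd
  haveI : NeZero n := ⟨hn⟩
  have h2 : IsUnit (2 : ZMod n) := by
    rw [show ((2 : ZMod n) = ((2 : ℕ) : ZMod n)) by norm_num, ZMod.isUnit_iff_coprime]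
    rw [Nat.coprime_comm]
    exact Nat.Coprime.symm (Nat.coprime_two_left.mpr hodd)
  -- sum over a symmetric set is killed by 2
  have key : ∀ S : Finset (ZMod n), S = -S → (∑ x ∈ S, x) = 0 := by
    intro S hS
    have hneg : (∑ x ∈ -S, x) = -∑ x ∈ S, x := by
      rw [show -S = S.image (fun x => -x) from rfl,
        Finset.sum_image (by intro a _ b _ hab; exact neg_injective hab),
        Finset.sum_neg_distrib]
    have : (∑ x ∈ S, x) = -∑ x ∈ S, x := by conv_lhs => rw [hS, hneg]
    have h2s : (2 : ZMod n) * (∑ x ∈ S, x) = 0 := by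
      rw [two_mul]; linear_combination this
    exact h2.mul_left_cancel (by rw [h2s, mul_zero])
  have hsA : (∑ x ∈ A, x) = 0 := key A hsymA
  have hsC : (∑ x ∈ C, x) = 0 := key C hsymC
  have hinj : ∀ a ∈ A, ∀ b ∈ A, r * a + h = r * b + h → a = b := by
    intro a _ b _ hab
    have := add_right_cancel hab
    exact hr.mul_left_cancel this
  have hsum : (∑ x ∈ C, x) = r * (∑ x ∈ A, x) + A.card • h := by
    rw [hC, Finset.sum_image hinj, Finset.sum_add_distrib, Finset.mul_sum, Finset.sum_const]
  rw [hsC, hsA, mul_zero, zero_add] at hsum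
  have hfin : ((A.card : ℕ) : ZMod n) * h = 0 := by
    rw [← nsmul_eq_mul, hsum]
  exact aux_dvd n A.card hn h hfin
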